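/- Let $x_1,\dots,x_m$ span $\mathbb{R}^n$, let $u^* \geq 0$ sum to 1 with $M(u^*) \succ 0$, and set $\alpha_i = x_i^T M(u^*)^{-2} x_i$ and $T = \operatorname{Trace}(M(u^*)^{-1})$. If $\alpha_i \leq T$ for all $i$ and $\alpha_i = T$ whenever $u^*_i > 0$, then for every $u \geq 0$ summing to 1 with $M(u) \succ 0$ we have $\operatorname{Trace}(M(u)^{-1}) \geq \operatorname{Trace}(M(u^*)^{-1})$. -/

import Mathlib

open Matrix

lemma posSemidef_trace_nonneg {n : ℕ} {A : Matrix (Fin n) (Fin n) ℝ}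
    (hA : A.PosSemidef) : 0 ≤ A.trace := by
  rw [Matrix.trace]
  apply Finset.sum_nonneg
  intro i _
  exact hA.diag_nonneg

lemma trace_mul_vecMulVec {n : ℕ} (D : Matrix (Fin n) (Fin n) ℝ) (a : Fin n → ℝ) :
    (D * vecMulVec a a).trace = a ⬝ᵥ D *ᵥ a := by
  simp [Matrix.trace, Matrix.mul_apply, Matrix.vecMulVec_apply, dotProduct,
    Matrix.mulVec, Finset.mul_sum, mul_comm, mul_left_comm]


/-- sufficiency of the first-order optimality conditions for the
A-optimal design problem: if `αᵢ = xᵢᵀ M(u*)⁻² xᵢ ≤ T = Trace(M(u*)⁻¹)` for all `i`,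
with equality whenever `u*ᵢ > 0`, then `u*` is a global minimizer of
`u ↦ Trace(M(u)⁻¹)` over the simplex. -/
theorem stmt17 {n m : ℕ} (x : Fin m → Fin n → ℝ)
    (hspan : Submodule.span ℝ (Set.range x) = ⊤)
    (M : (Fin m → ℝ) → Matrix (Fin n) (Fin n) ℝ)
    (hM : ∀ v, M v = ∑ i, v i • vecMulVec (x i) (x i))
    (ustar : Fin m → ℝ) (hus : ∀ i, 0 ≤ ustar i) (hssum : ∑ i, ustar i = 1)
    (hspd : (M ustar).PosDef)
    (hle : ∀ i, x i ⬝ᵥ ((M ustar)⁻¹ * (M ustar)⁻¹) *ᵥ x i ≤ ((M ustar)⁻¹).trace)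
    (heq : ∀ i, 0 < ustar i →
      x i ⬝ᵥ ((M ustar)⁻¹ * (M ustar)⁻¹) *ᵥ x i = ((M ustar)⁻¹).trace) :
    ∀ u : Fin m → ℝ, (∀ i, 0 ≤ u i) → ∑ i, u i = 1 → (M u).PosDef →
      ((M ustar)⁻¹).trace ≤ ((M u)⁻¹).trace := by
  intro u hu husum hBpd
  set A := M ustar with hA
  set B := M u with hB
  set C := A⁻¹ with hC
  set T := C.trace with hT
  -- B * B⁻¹ = 1 and B⁻¹ * B = 1
  have hBdet : IsUnit B.det := hBpd.det_pos.ne'.isUnit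
  have hBinv : B * B⁻¹ = 1 := Matrix.mul_nonsing_inv B hBdet
  have hBinv' : B⁻¹ * B = 1 := Matrix.nonsing_inv_mul B hBdet
  -- symmetry
  have hCH : Cᴴ = C := (hspd.isHermitian.inv)
  have hBiH : (B⁻¹)ᴴ = B⁻¹ := (hBpd.isHermitian.inv)
  -- positivity of trace((C - B⁻¹) * B * (C - B⁻¹))
  have hpsd : ((C - B⁻¹)ᴴ * B * (C - B⁻¹)).PosSemidef :=
    hBpd.posSemidef.conjTranspose_mul_mul_same _
  have hpsd' : (C * B * C - C - C + B⁻¹).PosSemidef := by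
    have e : (C - B⁻¹) * B * (C - B⁻¹)
        = C * B * C - C * (B * B⁻¹) - (B⁻¹ * B) * C + (B⁻¹ * B) * B⁻¹ := by
      noncomm_ring
    have h2 : (C - B⁻¹)ᴴ * B * (C - B⁻¹) = C * B * C - C - C + B⁻¹ := by
      rw [conjTranspose_sub, hCH, hBiH, e, hBinv, hBinv', mul_one, one_mul, one_mul]
    rwa [h2] at hpsd
  have htr : 0 ≤ (C * B * C).trace - T - T + B⁻¹.trace := by
    have := posSemidef_trace_nonneg hpsd'
    simpa [Matrix.trace_add, Matrix.trace_sub, hT] using this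
  have hCBC : (C * B * C).trace = ∑ i, u i * (x i ⬝ᵥ (C * C) *ᵥ x i) := by
    have h1 : C * B * C = ∑ i, u i • (C * vecMulVec (x i) (x i) * C) := by
      rw [hB, hM u, Finset.mul_sum, Finset.sum_mul]
      refine Finset.sum_congr rfl fun i _ => ?_
      rw [Matrix.mul_smul, Matrix.smul_mul]
    rw [h1, Matrix.trace_sum]
    refine Finset.sum_congr rfl fun i _ => ?_
    rw [Matrix.trace_smul, smul_eq_mul]
    congr 1
    rw [Matrix.trace_mul_cycle, ← trace_mul_vecMulVec]
  have hbound : (C * B * C).trace ≤ T := by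
    rw [hCBC]
    calc ∑ i, u i * (x i ⬝ᵥ (C * C) *ᵥ x i) ≤ ∑ i, u i * T :=
          Finset.sum_le_sum fun i _ => mul_le_mul_of_nonneg_left (hle i) (hu i)
      _ = T := by rw [← Finset.sum_mul, husum, one_mul]
  linarith
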